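/- In the Gel'fand–Dickey setting over sl(n+1), the distribution E on the symplectic leaf S is spanned by the vector fields X_V(S) = V_x + [V,S] with V ∈ G_{AB} = {V : [V,A] = 0 and V_x + [V,B] ∈ G_A^⊥}, and the map ψ: Γ_Q → E_{n+1} sending the matrix lifting V to the differential operator E = −Σ_{j=0}^{n} V^0_j ∂^j (first row of V) is a Lie algebra homomorphism from (Γ_Q, {·,·}₁) with bracket {V₁,V₂}₁ = ∂V₂/∂t₁ − ∂V₁/∂t₂ − [V₁,V₂] to (E_{n+1}, [·,·]_L) with Radul's bracket [E,F]_L = [E,F] + W_L(E)·(F) − W_L(F)·(E) mod RL. -/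

import Mathlib

/-!  A self-contained model of the algebra of pseudodifferential operators on the
circle (or over an abstract differential ring `(R, d)`).

A pseudodifferential operator `A = ∑_{i ≤ N} a_i ∂^i` is encoded by the sequence of
its coefficients `A : ℤ → R` (`A i = a_i`, vanishing for large `i`).  The product is
the standard one, determined by the generalized Leibniz rule
`∂^i ∘ b = ∑_{k ≥ 0} C(i,k) b^{(k)} ∂^{i-k}` with generalized binomial coefficients
`C(i,k) = Ring.choose i k`. -/

noncomputable section

namespace GD

variable {R : Type} [CommRing R]

/-- Pseudodifferential operators encoded by coefficient sequences:
`A : ℤ → R` stands for `∑ i, (A i) ∂^i`. -/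
abbrev PDO (R : Type) := ℤ → R

/-- The product of pseudodifferential operators, with respect to the derivation `d`
of the coefficient ring.  (The `finsum` is a finite sum whenever the two factors
have bounded order, which is the case throughout.) -/
def pmul (d : R → R) (A B : PDO R) : PDO R :=
  fun m => ∑ᶠ p : ℤ × ℕ,
    (Ring.choose p.1 p.2 : ℤ) • (A p.1 * d^[p.2] (B (m - p.1 + (p.2 : ℤ))))

/-- The single-term operator `a ∂^j`. -/
def term (a : R) (j : ℤ) : PDO R := fun m => if m = j then a else 0

/-- The identity operator `1 = ∂^0`. -/
def one : PDO R := term (1 : R) 0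

/-- The purely differential part `A₊` of a pseudodifferential operator
(the part with nonnegative powers of `∂`); `A₋ = A - A₊`. -/
def plus (A : PDO R) : PDO R := fun m => if 0 ≤ m then A m else 0

/-- `d` is a derivation of `R`. -/
def IsDeriv (d : R → R) : Prop :=
  (∀ a b, d (a + b) = d a + d b) ∧ ∀ a b, d (a * b) = d a * b + a * d b

end GD

namespace GD

variable {R : Type} [CommRing R]

lemma IsDeriv.zero {d : R → R} (hd : IsDeriv d) : d 0 = 0 := by
  have := hd.1 0 0; simpa using this

lemma IsDeriv.neg' {d : R → R} (hd : IsDeriv d) (a : R) : d (-a) = - d a := by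
  have h := hd.1 a (-a)
  rw [add_neg_cancel, hd.zero] at h
  exact (neg_eq_of_add_eq_zero_right h.symm).symm

lemma IsDeriv.sum {d : R → R} (hd : IsDeriv d) {ι : Type*} (s : Finset ι) (f : ι → R) :
    d (∑ i ∈ s, f i) = ∑ i ∈ s, d (f i) := by
  classical
  induction s using Finset.induction_on with
  | empty => simpa using hd.zero
  | insert a s h ih => rw [Finset.sum_insert h, Finset.sum_insert h, hd.1, ih]

lemma IsDeriv.nsmul {d : R → R} (hd : IsDeriv d) (k : ℕ) (x : R) :
    d (k • x) = k • d x := by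
  induction k with
  | zero => simpa using hd.zero
  | succ k ih => rw [succ_nsmul, succ_nsmul, hd.1, ih]

lemma IsDeriv.iter_zero {d : R → R} (hd : IsDeriv d) (k : ℕ) : d^[k] (0 : R) = 0 := by
  induction k with
  | zero => rfl
  | succ k ih => rw [Function.iterate_succ_apply', ih, hd.zero]

/-- Evaluation of a finite sum of single-term operators. -/
lemma sum_term_apply (N : ℕ) (a : ℕ → R) (m : ℤ) :
    (∑ c ∈ Finset.range N, term (a c) (c : ℤ)) m
      = if 0 ≤ m ∧ m < (N : ℤ) then a m.toNat else 0 := by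
  rw [Finset.sum_apply]
  by_cases h : 0 ≤ m ∧ m < (N : ℤ)
  · rw [if_pos h]
    rw [Finset.sum_eq_single m.toNat]
    · simp only [term]
      rw [if_pos]
      omega
    · intro b _ hb
      simp only [term]
      rw [if_neg]
      omega
    · intro hmem
      exfalso; apply hmem
      simp only [Finset.mem_range]
      omega
  · rw [if_neg h]
    apply Finset.sum_eq_zero
    intro c hc
    simp only [Finset.mem_range] at hc
    simp only [term]
    rw [if_neg]
    omega

lemma ring_choose_cast (c k : ℕ) : (Ring.choose (c : ℤ) k : ℤ) = (c.choose k : ℤ) := by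
  exact_mod_cast Ring.choose_natCast (R := ℤ) c k

end GD

namespace GD

variable {R : Type} [CommRing R]

/-- Product of a differential operator (finite sum of terms) with an arbitrary
pseudodifferential operator, as an explicit finite sum. -/
lemma pmul_sum_term (d : R → R) (N : ℕ) (a : ℕ → R) (B : PDO R) (m : ℤ) :
    pmul d (∑ c ∈ Finset.range N, term (a c) (c : ℤ)) B m
      = ∑ c ∈ Finset.range N, ∑ k ∈ Finset.range (c + 1),
          (c.choose k) • (a c * d^[k] (B (m - c + k))) := by
  classical
  rw [pmul]
  set A : PDO R := ∑ c ∈ Finset.range N, term (a c) (c : ℤ) with hA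
  have hAval : ∀ p1 : ℤ, A p1 = if 0 ≤ p1 ∧ p1 < (N : ℤ) then a p1.toNat else 0 :=
    fun p1 => sum_term_apply N a p1
  set s : Finset (ℤ × ℕ) := ((Finset.range N).image (Nat.cast : ℕ → ℤ)) ×ˢ Finset.range N
    with hs
  have hmem : ∀ p : ℤ × ℕ, p ∈ s ↔ ((0 ≤ p.1 ∧ p.1 < (N : ℤ)) ∧ p.2 < N) := by
    intro p
    simp only [hs, Finset.mem_product, Finset.mem_image, Finset.mem_range]
    constructor
    · rintro ⟨⟨c, hc, hceq⟩, h2⟩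
      refine ⟨⟨?_, ?_⟩, h2⟩ <;> omega
    · rintro ⟨⟨h0, h1⟩, h2⟩
      refine ⟨⟨p.1.toNat, by omega, by omega⟩, h2⟩
  have hsub : (Function.support fun p : ℤ × ℕ =>
      (Ring.choose p.1 p.2 : ℤ) • (A p.1 * d^[p.2] (B (m - p.1 + (p.2 : ℤ))))) ⊆ ↑s := by
    intro p hp
    simp only [Function.mem_support] at hp
    by_contra hps
    apply hp
    rw [Finset.mem_coe, hmem] at hps
    push_neg at hps
    by_cases h1 : 0 ≤ p.1 ∧ p.1 < (N : ℤ)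
    · have h2 := hps h1
      have hc : p.1 = ((p.1.toNat : ℕ) : ℤ) := by omega
      have hz : (Ring.choose p.1 p.2 : ℤ) = 0 := by
        conv_lhs => rw [hc]
        rw [ring_choose_cast, Nat.choose_eq_zero_of_lt (by omega)]
        rfl
      rw [hz, zero_smul]
    · rw [hAval p.1, if_neg h1, zero_mul, smul_zero]
  rw [finsum_eq_finset_sum_of_support_subset _ hsub]
  rw [hs, Finset.sum_product]
  rw [Finset.sum_image (fun x _ y _ h => by exact_mod_cast h)]
  apply Finset.sum_congr rfl
  intro c hc
  simp only [Finset.mem_range] at hc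
  have hAc : A ((c : ℕ) : ℤ) = a c := by
    rw [hAval, if_pos ⟨Int.natCast_nonneg c, by exact_mod_cast hc⟩]
    simp
  rw [← Finset.sum_subset (Finset.range_subset_range.2 (by omega : c + 1 ≤ N))
      (by
        intro k _ hk
        simp only [Finset.mem_range] at hk
        rw [ring_choose_cast, Nat.choose_eq_zero_of_lt (by omega)]
        simp)]
  apply Finset.sum_congr rfl
  intro k _
  rw [ring_choose_cast, hAc, natCast_zsmul]

end GD

namespace GD

variable {R : Type} [CommRing R]

/-- Left composition with `∂`: the coefficients of `∂ ∘ B`. -/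
def dop (d : R → R) (B : PDO R) : PDO R := fun m => B (m - 1) + d (B m)

lemma pascal_sum {M : Type*} [AddCommMonoid M] (c : ℕ) (h : ℕ → M) :
    ∑ k ∈ Finset.range (c + 2), ((c + 1).choose k) • h k
      = ∑ k ∈ Finset.range (c + 1), (c.choose k) • h k
        + ∑ k ∈ Finset.range (c + 1), (c.choose k) • h (k + 1) := by
  rw [Finset.sum_range_succ' (fun k => ((c + 1).choose k) • h k) (c + 1)]
  have e1 : ∀ k, ((c + 1).choose (k + 1)) • h (k + 1)
      = (c.choose k) • h (k + 1) + (c.choose (k + 1)) • h (k + 1) := by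
    intro k
    rw [Nat.choose_succ_succ, add_smul]
  simp only [e1]
  rw [Finset.sum_add_distrib]
  have e2 : ∑ k ∈ Finset.range (c + 1), (c.choose (k + 1)) • h (k + 1)
      = ∑ k ∈ Finset.range c, (c.choose (k + 1)) • h (k + 1) := by
    rw [Finset.sum_range_succ, Nat.choose_succ_self, zero_smul, add_zero]
  have e3 : ∑ k ∈ Finset.range (c + 1), (c.choose k) • h k
      = ∑ k ∈ Finset.range c, (c.choose (k + 1)) • h (k + 1) + ((c.choose 0) • h 0) := by
    rw [Finset.sum_range_succ' (fun k => (c.choose k) • h k) c]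
  rw [e2, e3]
  simp only [Nat.choose_zero_right, one_smul, Nat.choose_zero_right]
  abel

/-- The iterate `∂^c ∘ B` via the generalized Leibniz rule. -/
lemma iter_dop_eq {d : R → R} (hd : IsDeriv d) (c : ℕ) (B : PDO R) (m : ℤ) :
    (dop d)^[c] B m
      = ∑ k ∈ Finset.range (c + 1), (c.choose k) • d^[k] (B (m - c + k)) := by
  induction c generalizing m with
  | zero => simp
  | succ c ih =>
    rw [Function.iterate_succ_apply', dop]
    rw [ih (m - 1), ih m]
    rw [hd.sum]
    have e1 : ∀ k, d ((c.choose k) • d^[k] (B (m - c + k)))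
        = (c.choose k) • d^[k + 1] (B (m - c + k)) := by
      intro k
      rw [hd.nsmul, Function.iterate_succ_apply']
    simp only [e1]
    have hp := pascal_sum (M := R) c (fun k => d^[k] (B (m - (c + 1) + k)))
    have e2 : ∀ k : ℕ, m - 1 - (c : ℤ) + k = m - ((c : ℕ) + 1 : ℕ) + k := by
      intro k; push_cast; ring
    have e3 : ∀ k : ℕ, m - (c : ℤ) + k = m - ((c : ℕ) + 1 : ℕ) + ((k + 1 : ℕ) : ℤ) := by
      intro k; push_cast; ring
    calc (∑ k ∈ Finset.range (c + 1), (c.choose k) • d^[k] (B (m - 1 - c + k)))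
          + ∑ k ∈ Finset.range (c + 1), (c.choose k) • d^[k + 1] (B (m - c + k))
        = (∑ k ∈ Finset.range (c + 1), (c.choose k) • d^[k] (B (m - ((c : ℕ) + 1 : ℕ) + k)))
          + ∑ k ∈ Finset.range (c + 1),
              (c.choose k) • d^[k + 1] (B (m - ((c : ℕ) + 1 : ℕ) + ((k + 1 : ℕ) : ℤ))) := by
          congr 1
          · exact Finset.sum_congr rfl fun k _ => by rw [e2 k]
          · exact Finset.sum_congr rfl fun k _ => by rw [← e3 k]
      _ = ∑ k ∈ Finset.range (c + 2),
            ((c + 1).choose k) • d^[k] (B (m - ((c : ℕ) + 1 : ℕ) + k)) := hp.symm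
      _ = ∑ k ∈ Finset.range (c + 1 + 1),
            ((c + 1).choose k) • d^[k] (B (m - ((c : ℕ) + 1 : ℕ) + k)) := rfl

end GD

namespace GD

variable {R : Type} [CommRing R]

/-- The coefficients of the product `(a ∂^c) ∘ B`. -/
def tml (d : R → R) (a : R) (c : ℕ) (B : PDO R) : PDO R :=
  fun m => ∑ k ∈ Finset.range (c + 1), (c.choose k) • (a * d^[k] (B (m - c + k)))

lemma tml_eq {d : R → R} (hd : IsDeriv d) (a : R) (c : ℕ) (B : PDO R) (m : ℤ) :
    tml d a c B m = a * (dop d)^[c] B m := by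
  rw [tml, iter_dop_eq hd, Finset.mul_sum]
  exact Finset.sum_congr rfl fun k _ => (mul_smul_comm _ _ _).symm

lemma tml_zero (d : R → R) (c : ℕ) (B : PDO R) (m : ℤ) : tml d 0 c B m = 0 := by
  rw [tml]
  apply Finset.sum_eq_zero
  intro k _
  rw [zero_mul, smul_zero]

lemma tml_add (d : R → R) (a b : R) (c : ℕ) (B : PDO R) (m : ℤ) :
    tml d (a + b) c B m = tml d a c B m + tml d b c B m := by
  simp only [tml, add_mul, smul_add]
  rw [Finset.sum_add_distrib]

lemma tml_smul (d : R → R) (r a : R) (c : ℕ) (B : PDO R) (m : ℤ) :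
    tml d (r * a) c B m = r * tml d a c B m := by
  simp only [tml, Finset.mul_sum]
  exact Finset.sum_congr rfl fun k _ => by rw [mul_assoc, mul_smul_comm]

lemma dop_tml {d : R → R} (hd : IsDeriv d) (a : R) (c : ℕ) (B : PDO R) (m : ℤ) :
    dop d (tml d a c B) m = tml d a (c + 1) B m + tml d (d a) c B m := by
  have e2 : ∀ k : ℕ, m - 1 - (c : ℤ) + k = m - ((c : ℕ) + 1 : ℕ) + k := by
    intro k; push_cast; ring
  have e3 : ∀ k : ℕ, m - (c : ℤ) + k = m - ((c : ℕ) + 1 : ℕ) + ((k + 1 : ℕ) : ℤ) := by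
    intro k; push_cast; ring
  have hL : dop d (tml d a c B) m
      = (∑ k ∈ Finset.range (c + 1), (c.choose k) • (a * d^[k] (B (m - 1 - c + k))))
        + ((∑ k ∈ Finset.range (c + 1), (c.choose k) • (d a * d^[k] (B (m - c + k))))
          + ∑ k ∈ Finset.range (c + 1), (c.choose k) • (a * d^[k + 1] (B (m - c + k)))) := by
    rw [dop, tml, tml, hd.sum]
    have e1 : ∀ k, d ((c.choose k) • (a * d^[k] (B (m - c + k))))
        = (c.choose k) • (d a * d^[k] (B (m - c + k)))
          + (c.choose k) • (a * d^[k + 1] (B (m - c + k))) := by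
      intro k
      rw [hd.nsmul, hd.2, smul_add, Function.iterate_succ_apply']
    simp only [e1]
    rw [Finset.sum_add_distrib]
  have hR : tml d a (c + 1) B m
      = (∑ k ∈ Finset.range (c + 1), (c.choose k) • (a * d^[k] (B (m - 1 - c + k))))
        + ∑ k ∈ Finset.range (c + 1), (c.choose k) • (a * d^[k + 1] (B (m - c + k))) := by
    rw [tml]
    rw [show (c + 1 + 1 : ℕ) = c + 2 from rfl]
    rw [pascal_sum (M := R) c (fun k => a * d^[k] (B (m - ((c : ℕ) + 1 : ℕ) + k)))]
    congr 1
    · exact Finset.sum_congr rfl fun k _ => by rw [e2 k]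
    · exact Finset.sum_congr rfl fun k _ => by rw [e3 k]
  rw [hL, hR, tml]
  abel

/-- "Being a (differential-operator) left multiple of `L`", in coefficient form. -/
def nice (d : R → R) (L X : PDO R) : Prop :=
  ∃ (N : ℕ) (g : ℕ → R), X = fun m => ∑ c ∈ Finset.range N, tml d (g c) c L m

lemma nice_zero (d : R → R) (L : PDO R) : nice d L (fun _ => 0) :=
  ⟨0, fun _ => 0, by funext m; rw [Finset.sum_range_zero]⟩

lemma nice_smulL (d : R → R) (L : PDO R) (b : R) : nice d L (fun m => b * L m) := by
  refine ⟨1, fun _ => b, ?_⟩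
  funext m
  rw [Finset.sum_range_one, tml, Finset.sum_range_one]
  norm_num

lemma sum_tml_extend (d : R → R) (L : PDO R) {N M : ℕ} (h : N ≤ M) (g : ℕ → R) (m : ℤ) :
    ∑ c ∈ Finset.range M, tml d (if c < N then g c else 0) c L m
      = ∑ c ∈ Finset.range N, tml d (g c) c L m := by
  rw [← Finset.sum_subset (Finset.range_subset_range.2 h)
      (by
        intro c _ hc
        simp only [Finset.mem_range] at hc
        rw [if_neg hc, tml_zero])]
  exact Finset.sum_congr rfl fun c hc => by
    rw [if_pos (Finset.mem_range.1 hc)]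

lemma nice_add {d : R → R} {L X Y : PDO R} (hX : nice d L X) (hY : nice d L Y) :
    nice d L (fun m => X m + Y m) := by
  obtain ⟨N1, g1, rfl⟩ := hX
  obtain ⟨N2, g2, rfl⟩ := hY
  refine ⟨max N1 N2, fun c => (if c < N1 then g1 c else 0) + (if c < N2 then g2 c else 0), ?_⟩
  funext m
  simp only [tml_add]
  rw [Finset.sum_add_distrib,
    sum_tml_extend d L (le_max_left N1 N2) g1 m,
    sum_tml_extend d L (le_max_right N1 N2) g2 m]

lemma nice_smul {d : R → R} {L X : PDO R} (r : R) (hX : nice d L X) :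
    nice d L (fun m => r * X m) := by
  obtain ⟨N, g, rfl⟩ := hX
  refine ⟨N, fun c => r * g c, ?_⟩
  funext m
  rw [Finset.mul_sum]
  exact Finset.sum_congr rfl fun c _ => (tml_smul d r (g c) c L m).symm

lemma nice_neg {d : R → R} {L X : PDO R} (hX : nice d L X) :
    nice d L (fun m => -(X m)) := by
  have := nice_smul (-1) hX
  simpa [neg_one_mul] using this

lemma nice_sum {d : R → R} {L : PDO R} {ι : Type*} (s : Finset ι) (F : ι → PDO R)
    (hF : ∀ i ∈ s, nice d L (F i)) :
    nice d L (fun m => ∑ i ∈ s, F i m) := by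
  classical
  induction s using Finset.induction_on with
  | empty => simpa using nice_zero d L
  | @insert i s' h ih =>
    simp only [Finset.sum_insert h]
    exact nice_add (hF i (Finset.mem_insert_self i s'))
      (ih fun j hj => hF j (Finset.mem_insert_of_mem hj))

lemma nice_dop {d : R → R} (hd : IsDeriv d) {L X : PDO R} (hX : nice d L X) :
    nice d L (dop d X) := by
  obtain ⟨N, g, rfl⟩ := hX
  have hdop : dop d (fun m => ∑ c ∈ Finset.range N, tml d (g c) c L m)
      = fun m => (∑ c ∈ Finset.range N, tml d (g c) (c + 1) L m)
          + ∑ c ∈ Finset.range N, tml d (d (g c)) c L m := by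
    funext m
    rw [dop, hd.sum, ← Finset.sum_add_distrib, ← Finset.sum_add_distrib]
    exact Finset.sum_congr rfl fun c _ => dop_tml hd (g c) c L m
  rw [hdop]
  have h1 : nice d L (fun m => ∑ c ∈ Finset.range N, tml d (d (g c)) c L m) :=
    ⟨N, fun c => d (g c), rfl⟩
  have h2 : nice d L (fun m => ∑ c ∈ Finset.range N, tml d (g c) (c + 1) L m) := by
    refine ⟨N + 1, fun c => if c = 0 then 0 else g (c - 1), ?_⟩
    funext m
    rw [Finset.sum_range_succ' (fun c => tml d (if c = 0 then 0 else g (c - 1)) c L m) N]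
    simp [tml_zero]
  have := nice_add h2 h1
  simpa using this

lemma nice_dop_iter {d : R → R} (hd : IsDeriv d) {L X : PDO R} (hX : nice d L X) (e : ℕ) :
    nice d L ((dop d)^[e] X) := by
  induction e with
  | zero => exact hX
  | succ e ih => rw [Function.iterate_succ_apply']; exact nice_dop hd ih

end GD

namespace GD

variable {R : Type} [CommRing R]

/-- The operator built from the `k`-th row of a matrix lifting. -/
def rowf (n : ℕ) (W : ℕ → ℕ → R) (k : ℕ) : PDO R :=
  fun m => if 0 ≤ m ∧ m ≤ (n : ℤ) then W k m.toNat else 0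

lemma iter_dop_neg {d : R → R} (hd : IsDeriv d) (e : ℕ) (B : PDO R) :
    (dop d)^[e] (fun m => -(B m)) = fun m => -((dop d)^[e] B m) := by
  induction e with
  | zero => rfl
  | succ e ih =>
    rw [Function.iterate_succ_apply', Function.iterate_succ_apply', ih]
    funext m
    rw [dop, dop, hd.neg']
    ring

/-- The basic recursion: `∂ ∘ e_k = e_{k+1} + W_{k,n} · L`. -/
lemma red {d : R → R} (hd : IsDeriv d) (n : ℕ) (u : ℕ → R) (hun : u n = 0)
    (L : PDO R)
    (hLval : ∀ m : ℤ, L m = if m = (n : ℤ) + 1 then 1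
      else if 0 ≤ m ∧ m ≤ (n : ℤ) then -u m.toNat else 0)
    (W : ℕ → ℕ → R)
    (hrec0 : ∀ k ≤ n, W (k + 1) 0 = d (W k 0) + W k n * u 0)
    (hrecl : ∀ k ≤ n, ∀ l, 1 ≤ l → l ≤ n →
      W (k + 1) l = d (W k l) + W k (l - 1) + u l * W k n)
    (k : ℕ) (hk : k ≤ n) :
    dop d (rowf n W k) = fun m => rowf n W (k + 1) m + W k n * L m := by
  funext m
  simp only [dop, rowf, hLval]
  by_cases hm0 : m < 0
  · rw [if_neg (by omega), if_neg (by omega), if_neg (by omega), if_neg (by omega),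
      if_neg (by omega), hd.zero]
    ring
  · by_cases hm1 : m = 0
    · subst hm1
      rw [if_neg (by omega), if_pos (by omega), if_pos (by omega), if_neg (by omega),
        if_pos (by omega)]
      have ht : (0 : ℤ).toNat = 0 := rfl
      rw [ht, hrec0 k hk]
      ring
    · by_cases hm2 : m ≤ (n : ℤ)
      · -- 1 ≤ m ≤ n
        rw [if_pos (by omega), if_pos (by omega), if_pos (by omega), if_neg (by omega),
          if_pos (by omega)]
        have ht : (m - 1).toNat = m.toNat - 1 := by omega
        rw [ht, hrecl k hk m.toNat (by omega) (by omega)]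
        ring
      · by_cases hm3 : m = (n : ℤ) + 1
        · rw [if_pos (by omega), if_neg (by omega), if_neg (by omega), if_pos hm3, hd.zero]
          have ht : (m - 1).toNat = n := by omega
          rw [ht]
          ring
        · rw [if_neg (by omega), if_neg (by omega), if_neg (by omega), if_neg hm3,
            if_neg (by omega), hd.zero]
          ring

/-- Iterating: `∂^c ∘ e_0 = e_c + ∑_{j<c} ∂^{c-1-j} ∘ (W_{j,n} · L)`. -/
lemma phi {d : R → R} (hd : IsDeriv d) (n : ℕ) (u : ℕ → R) (hun : u n = 0)
    (L : PDO R)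
    (hLval : ∀ m : ℤ, L m = if m = (n : ℤ) + 1 then 1
      else if 0 ≤ m ∧ m ≤ (n : ℤ) then -u m.toNat else 0)
    (W : ℕ → ℕ → R)
    (hrec0 : ∀ k ≤ n, W (k + 1) 0 = d (W k 0) + W k n * u 0)
    (hrecl : ∀ k ≤ n, ∀ l, 1 ≤ l → l ≤ n →
      W (k + 1) l = d (W k l) + W k (l - 1) + u l * W k n)
    (c : ℕ) (hc : c ≤ n + 1) :
    (dop d)^[c] (rowf n W 0)
      = fun m => rowf n W c m
          + ∑ j ∈ Finset.range c, (dop d)^[c - 1 - j] (fun m' => W j n * L m') m := by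
  induction c with
  | zero =>
    funext m
    simp
  | succ c ih =>
    have hc' : c ≤ n := by omega
    rw [Function.iterate_succ_apply', ih (by omega)]
    have hsplit : dop d (fun m => rowf n W c m
          + ∑ j ∈ Finset.range c, (dop d)^[c - 1 - j] (fun m' => W j n * L m') m)
        = fun m => dop d (rowf n W c) m
          + ∑ j ∈ Finset.range c, (dop d)^[c - j] (fun m' => W j n * L m') m := by
      funext m
      simp only [dop]
      rw [hd.1, hd.sum]
      have e1 : ∀ j ∈ Finset.range c,
          d ((dop d)^[c - 1 - j] (fun m' => W j n * L m') m)
            = (dop d)^[c - j] (fun m' => W j n * L m') m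
              - (dop d)^[c - 1 - j] (fun m' => W j n * L m') (m - 1) := by
        intro j hj
        simp only [Finset.mem_range] at hj
        have hcj : c - j = (c - 1 - j) + 1 := by omega
        rw [hcj, Function.iterate_succ_apply', dop]
        ring
      rw [Finset.sum_congr rfl e1, Finset.sum_sub_distrib]
      ring
    rw [hsplit, red hd n u hun L hLval W hrec0 hrecl c hc']
    funext m
    rw [Finset.sum_range_succ]
    have e2 : ∀ j, c + 1 - 1 - j = c - j := by omega
    simp only [e2, Nat.sub_self, Function.iterate_zero, id_eq]
    ring

end GD

open GD in
/-- Proposition 5.4: the map `ψ`, sending a matrix lifting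
`V ∈ Γ_Q` to the differential operator `E = -∑_j V^0_j ∂^j` built from its first
row, is a Lie algebra homomorphism from `(Γ_Q, {·,·}₁)`, with the bracket
`{V,W}₁ = ∂W/∂t₁ - ∂V/∂t₂ - [V,W]`, to `(E_{n+1}, [·,·]_L)` with Radul's bracket
`[E,F]_L = [E,F] + W_L(E)·(F) - W_L(F)·(E) mod RL`.

Here the directional derivatives `∂/∂t₁, ∂/∂t₂` along the Hamiltonian vector
fields `P₁V, P₁W` are modelled by derivations `D1, D2` of the coefficient ring
which commute with `d` and whose action on the coordinates `u_j` is the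
reduced Hamiltonian vector field (redpoibis with `λ = 0`); by Proposition 5.3
these variations of `L` are exactly `W_L(E)` and `W_L(F)`, so that
`W_L(E)·(F) = ∂F/∂t₁` is the coefficientwise action of `D1` on `F`. -/
theorem gd_psi_lie_algebra_morphism {R : Type} [CommRing R] (d D1 D2 : R → R)
    (hd : GD.IsDeriv d) (hD1 : GD.IsDeriv D1) (hD2 : GD.IsDeriv D2)
    (hc1 : ∀ a, D1 (d a) = d (D1 a)) (hc2 : ∀ a, D2 (d a) = d (D2 a))
    (n : ℕ) (hn : 0 < n) (u : ℕ → R) (hun : u n = 0)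
    (V W : ℕ → ℕ → R)
    (hrec0V : ∀ k ≤ n, V (k + 1) 0 = d (V k 0) + V k n * u 0)
    (hreclV : ∀ k ≤ n, ∀ l, 1 ≤ l → l ≤ n →
      V (k + 1) l = d (V k l) + V k (l - 1) + u l * V k n)
    (hrec0W : ∀ k ≤ n, W (k + 1) 0 = d (W k 0) + W k n * u 0)
    (hreclW : ∀ k ≤ n, ∀ l, 1 ≤ l → l ≤ n →
      W (k + 1) l = d (W k l) + W k (l - 1) + u l * W k n)
    (htrV : ∑ k ∈ Finset.range (n + 1), V k k = 0)
    (htrW : ∑ k ∈ Finset.range (n + 1), W k k = 0)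
    (hupunV : 0 = d (V n n) + V n (n - 1) - ∑ l ∈ Finset.range n, u l * V l n)
    (hupunW : 0 = d (W n n) + W n (n - 1) - ∑ l ∈ Finset.range n, u l * W l n)
    (hD1u : ∀ j < n,
      D1 (u j) = V (n + 1) j - ∑ l ∈ Finset.range n, u l * V l j)
    (hD2u : ∀ j < n,
      D2 (u j) = W (n + 1) j - ∑ l ∈ Finset.range n, u l * W l j)
    (L E F : PDO R)
    (hL : L = term 1 ((n : ℤ) + 1) - ∑ j ∈ Finset.range n, term (u j) (j : ℤ))
    (hE : E = - ∑ j ∈ Finset.range (n + 1), term (V 0 j) (j : ℤ))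
    (hF : F = - ∑ j ∈ Finset.range (n + 1), term (W 0 j) (j : ℤ)) :
    ∃ Rop : PDO R, (∀ m : ℤ, m < 0 → Rop m = 0) ∧
      (∃ N : ℤ, ∀ m : ℤ, N < m → Rop m = 0) ∧
      -- `ψ({V,W}₁) = [E,F] + W_L(E)·(F) - W_L(F)·(E) + R L`
      (- ∑ j ∈ Finset.range (n + 1),
          term (D1 (W 0 j) - D2 (V 0 j)
            - ∑ c ∈ Finset.range (n + 1),
                (V 0 c * W c j - W 0 c * V c j)) (j : ℤ))
        = (pmul d E F - pmul d F E)
            + (fun m => D1 (F m)) - (fun m => D2 (E m)) + pmul d Rop L := by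

  classical
  have hcast : ((n + 1 : ℕ) : ℤ) = (n : ℤ) + 1 := by push_cast; ring
  -- values of L
  have hLval : ∀ m : ℤ, L m = if m = (n : ℤ) + 1 then 1
      else if 0 ≤ m ∧ m ≤ (n : ℤ) then -u m.toNat else 0 := by
    intro m
    rw [hL, Pi.sub_apply, sum_term_apply]
    simp only [term]
    by_cases h1 : m = (n : ℤ) + 1
    · rw [if_pos h1, if_pos h1, if_neg (by omega)]
      ring
    · rw [if_neg h1, if_neg h1]
      by_cases h2 : 0 ≤ m ∧ m < (n : ℤ)
      · rw [if_pos h2, if_pos (by omega)]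
        ring
      · rw [if_neg h2]
        by_cases h3 : 0 ≤ m ∧ m ≤ (n : ℤ)
        · rw [if_pos h3]
          have ht : m.toNat = n := by omega
          rw [ht, hun]
          ring
        · rw [if_neg h3]
          ring
  -- values of E and F
  have hFval : F = fun m => -(rowf n W 0 m) := by
    funext m
    rw [hF, Pi.neg_apply, sum_term_apply, rowf, hcast]
    split_ifs with h1 h2
    · rfl
    · omega
    · omega
    · rw [neg_zero]
  have hEval : E = fun m => -(rowf n V 0 m) := by
    funext m
    rw [hE, Pi.neg_apply, sum_term_apply, rowf, hcast]
    split_ifs with h1 h2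
    · rfl
    · omega
    · omega
    · rw [neg_zero]
  -- negation of a sum of terms
  have hneg : ∀ (N : ℕ) (a : ℕ → R), (- ∑ c ∈ Finset.range N, term (a c) (c : ℤ))
      = ∑ c ∈ Finset.range N, term (-(a c)) (c : ℤ) := by
    intro N a
    funext m
    rw [Pi.neg_apply, sum_term_apply, sum_term_apply]
    split_ifs
    · rfl
    · rw [neg_zero]
  -- the correction sums
  set Cw : ℕ → PDO R := fun c => fun m =>
    ∑ j ∈ Finset.range c, (dop d)^[c - 1 - j] (fun m' => W j n * L m') m with hCwdef
  set Cv : ℕ → PDO R := fun c => fun m =>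
    ∑ j ∈ Finset.range c, (dop d)^[c - 1 - j] (fun m' => V j n * L m') m with hCvdef
  have hphiW' : ∀ c ≤ n + 1, ∀ m : ℤ, (dop d)^[c] (rowf n W 0) m = rowf n W c m + Cw c m :=
    fun c hc m => congrFun (phi hd n u hun L hLval W hrec0W hreclW c hc) m
  have hphiV' : ∀ c ≤ n + 1, ∀ m : ℤ, (dop d)^[c] (rowf n V 0) m = rowf n V c m + Cv c m :=
    fun c hc m => congrFun (phi hd n u hun L hLval V hrec0V hreclV c hc) m
  have hiterF : ∀ (c : ℕ) (m : ℤ), (dop d)^[c] F m = -((dop d)^[c] (rowf n W 0) m) := by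
    intro c m
    rw [hFval]
    exact congrFun (iter_dop_neg hd c _) m
  have hiterE : ∀ (c : ℕ) (m : ℤ), (dop d)^[c] E m = -((dop d)^[c] (rowf n V 0) m) := by
    intro c m
    rw [hEval]
    exact congrFun (iter_dop_neg hd c _) m
  -- the two products
  have hEF : ∀ m : ℤ, pmul d E F m
      = ∑ c ∈ Finset.range (n + 1), (V 0 c * rowf n W c m + V 0 c * Cw c m) := by
    intro m
    rw [hE, hneg, pmul_sum_term]
    refine Finset.sum_congr rfl fun c hc => ?_
    have h1 : ∑ k ∈ Finset.range (c + 1),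
        (c.choose k) • ((-(V 0 c)) * d^[k] (F (m - c + k))) = tml d (-(V 0 c)) c F m := rfl
    simp only [Finset.mem_range] at hc
    rw [h1, tml_eq hd, hiterF c m, hphiW' c (by omega) m]
    ring
  have hFE : ∀ m : ℤ, pmul d F E m
      = ∑ c ∈ Finset.range (n + 1), (W 0 c * rowf n V c m + W 0 c * Cv c m) := by
    intro m
    rw [hF, hneg, pmul_sum_term]
    refine Finset.sum_congr rfl fun c hc => ?_
    have h1 : ∑ k ∈ Finset.range (c + 1),
        (c.choose k) • ((-(W 0 c)) * d^[k] (E (m - c + k))) = tml d (-(W 0 c)) c E m := rfl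
    simp only [Finset.mem_range] at hc
    rw [h1, tml_eq hd, hiterE c m, hphiV' c (by omega) m]
    ring
  -- the correction operator is a multiple of L
  have hniceX : nice d L (fun m => ∑ c ∈ Finset.range (n + 1),
      (W 0 c * Cv c m + -(V 0 c * Cw c m))) := by
    refine nice_sum (Finset.range (n + 1)) _ fun c _ => ?_
    refine nice_add (nice_smul (W 0 c) ?_) (nice_neg (nice_smul (V 0 c) ?_))
    · exact nice_sum (Finset.range c) _
        (fun j _ => nice_dop_iter hd (nice_smulL d L (V j n)) (c - 1 - j))
    · exact nice_sum (Finset.range c) _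
        (fun j _ => nice_dop_iter hd (nice_smulL d L (W j n)) (c - 1 - j))
  obtain ⟨NR, g, hXeq⟩ := hniceX
  refine ⟨∑ c ∈ Finset.range NR, term (g c) (c : ℤ), ?_, ⟨(NR : ℤ), ?_⟩, ?_⟩
  · intro m hm
    rw [sum_term_apply, if_neg (by omega)]
  · intro m hm
    rw [sum_term_apply, if_neg (by omega)]
  -- the main identity
  have hRopL : ∀ m : ℤ, pmul d (∑ c ∈ Finset.range NR, term (g c) (c : ℤ)) L m
      = ∑ c ∈ Finset.range (n + 1), (W 0 c * Cv c m + -(V 0 c * Cw c m)) := by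
    intro m
    rw [pmul_sum_term]
    have h1 : ∑ c ∈ Finset.range NR, ∑ k ∈ Finset.range (c + 1),
        (c.choose k) • (g c * d^[k] (L (m - c + k)))
        = ∑ c ∈ Finset.range NR, tml d (g c) c L m := rfl
    rw [h1]
    exact (congrFun hXeq m).symm
  have hD1F : ∀ m : ℤ, D1 (F m)
      = -(if 0 ≤ m ∧ m ≤ (n : ℤ) then D1 (W 0 m.toNat) else 0) := by
    intro m
    rw [congrFun hFval m]
    simp only [rowf]
    split_ifs with h
    · exact hD1.neg' _
    · rw [neg_zero, hD1.zero]
  have hD2E : ∀ m : ℤ, D2 (E m)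
      = -(if 0 ≤ m ∧ m ≤ (n : ℤ) then D2 (V 0 m.toNat) else 0) := by
    intro m
    rw [congrFun hEval m]
    simp only [rowf]
    split_ifs with h
    · exact hD2.neg' _
    · rw [neg_zero, hD2.zero]
  funext m
  simp only [Pi.add_apply, Pi.sub_apply, Pi.neg_apply]
  rw [sum_term_apply, hcast, hEF m, hFE m, hRopL m, hD1F m, hD2E m]
  by_cases hP : 0 ≤ m ∧ m ≤ (n : ℤ)
  · rw [if_pos (by omega : 0 ≤ m ∧ m < (n : ℤ) + 1), if_pos hP, if_pos hP]
    have hcomb : ∑ c ∈ Finset.range (n + 1), (V 0 c * rowf n W c m + V 0 c * Cw c m)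
        - ∑ c ∈ Finset.range (n + 1), (W 0 c * rowf n V c m + W 0 c * Cv c m)
        + ∑ c ∈ Finset.range (n + 1), (W 0 c * Cv c m + -(V 0 c * Cw c m))
        = ∑ c ∈ Finset.range (n + 1), (V 0 c * W c m.toNat - W 0 c * V c m.toNat) := by
      rw [← Finset.sum_sub_distrib, ← Finset.sum_add_distrib]
      refine Finset.sum_congr rfl fun c _ => ?_
      simp only [rowf, if_pos hP]
      ring
    linear_combination -hcomb
  · rw [if_neg (by omega), if_neg hP, if_neg hP]
    have hcomb : ∑ c ∈ Finset.range (n + 1), (V 0 c * rowf n W c m + V 0 c * Cw c m)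
        - ∑ c ∈ Finset.range (n + 1), (W 0 c * rowf n V c m + W 0 c * Cv c m)
        + ∑ c ∈ Finset.range (n + 1), (W 0 c * Cv c m + -(V 0 c * Cw c m))
        = ∑ c ∈ Finset.range (n + 1), (0 : R) := by
      rw [← Finset.sum_sub_distrib, ← Finset.sum_add_distrib]
      refine Finset.sum_congr rfl fun c _ => ?_
      simp only [rowf, if_neg hP]
      ring
    rw [Finset.sum_const, smul_zero] at hcomb
    linear_combination -hcomb
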